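/- arXiv:1801.09456 — 2 statements merged into one kernel-verified Lean document; each statement's English description precedes it below -/
import Mathlib

section
/- Let Z_1, Z_2, … be an infinite sequence of independent standard normal random variables and let Z_(n) = max(Z_1, …, Z_n) be the sample maximum of the first n variables. Then, as n → ∞, the normalized maximum √(2 log n) · Z_(n) − 2 log n + (1/2) log(4π log n) converges in distribution to the standard Gumbel distribution G_3, whose cumulative distribution function is exp(−e^{−z}). -/
open MeasureTheory ProbabilityTheory Filter Topology BoundedContinuousFunction

/-- The `k`-th order statistic (1-based rank) of the values `v : Fin n → ℝ`:
the `k`-th smallest value of the sample. -/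
noncomputable def orderStat {n : ℕ} (v : Fin n → ℝ) (k : ℕ) : ℝ :=
  if h : k - 1 < n then v (Tuple.sort v ⟨k - 1, h⟩) else 0

section Helpers
open Set Real


noncomputable def Erfc (t : ℝ) : ℝ := ∫ s in Ioi t, Real.exp (-s^2/2)

lemma expInt : Integrable (fun s : ℝ => Real.exp (-s^2/2)) := by
  have := integrable_exp_neg_mul_sq (b := (1/2 : ℝ)) (by norm_num)
  refine this.congr (Eventually.of_forall fun x => by ring_nf)

lemma tendsto_exp_neg_sq : Tendsto (fun s : ℝ => Real.exp (-s^2/2)) atTop (𝓝 0) := by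
  apply Real.tendsto_exp_atBot.comp
  have h1 : Tendsto (fun s : ℝ => s^2) atTop atTop := tendsto_pow_atTop (by norm_num)
  have h2 : Tendsto (fun s : ℝ => -(s^2 * (1/2))) atTop atBot :=
    tendsto_neg_atBot_iff.mpr (h1.atTop_mul_const (show (0:ℝ) < 1/2 by norm_num))
  refine h2.congr fun s => by ring

lemma erfc_upper {t : ℝ} (ht : 1 ≤ t) : Erfc t ≤ t⁻¹ * Real.exp (-t^2/2) := by
  have htpos : (0:ℝ) < t := by linarith
  have hderiv : ∀ x ∈ Ici t, HasDerivAt (fun s : ℝ => -s⁻¹ * Real.exp (-s^2/2))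
      ((1 + x⁻¹^2) * Real.exp (-x^2/2)) x := by
    intro x hx
    have hx0 : x ≠ 0 := by simp only [mem_Ici] at hx; nlinarith
    have h1 : HasDerivAt (fun s : ℝ => -s⁻¹) (x⁻¹^2) x := by
      have := (hasDerivAt_inv hx0).neg
      rw [neg_neg, ← inv_pow] at this
      exact this
    have h2 : HasDerivAt (fun s : ℝ => Real.exp (-s^2/2)) (-x * Real.exp (-x^2/2)) x := by
      have h3 : HasDerivAt (fun s : ℝ => -s^2/2) (-x) x := by
        have := (hasDerivAt_pow 2 x).neg.div_const 2
        exact this.congr_deriv (by norm_num; ring)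
      have := (Real.hasDerivAt_exp (-x^2/2)).comp x h3
      exact this.congr_deriv (by ring)
    have := h1.mul h2
    refine this.congr_deriv ?_
    field_simp
    ring
  have hint : IntegrableOn (fun x : ℝ => (1 + x⁻¹^2) * Real.exp (-x^2/2)) (Ioi t) := by
    apply Integrable.mono (g := fun x : ℝ => 2 * Real.exp (-x^2/2))
      ((expInt.const_mul 2).restrict (s := Ioi t))
    · apply Measurable.aestronglyMeasurable
      measurability
    · filter_upwards [ae_restrict_mem measurableSet_Ioi] with x hx
      simp only [mem_Ioi] at hx
      have hx1 : 1 ≤ x := le_trans ht hx.le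
      have h1 : x⁻¹^2 ≤ 1 := by
        rw [sq_le_one_iff_abs_le_one, abs_inv]
        rw [abs_of_nonneg (by linarith)]
        rw [inv_le_one_iff₀]
        right; linarith
      rw [Real.norm_eq_abs, Real.norm_eq_abs, abs_of_nonneg (by positivity),
        abs_of_nonneg (by positivity)]
      nlinarith [Real.exp_pos (-x^2/2)]
  have hlim : Tendsto (fun s : ℝ => -s⁻¹ * Real.exp (-s^2/2)) atTop (𝓝 0) := by
    have := (tendsto_inv_atTop_zero.neg).mul tendsto_exp_neg_sq
    simpa using this
  have key := integral_Ioi_of_hasDerivAt_of_tendsto' hderiv hint hlim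
  rw [zero_sub, neg_mul, neg_neg] at key
  have hmono : Erfc t ≤ ∫ x in Ioi t, (1 + x⁻¹^2) * Real.exp (-x^2/2) := by
    apply setIntegral_mono_on expInt.restrict hint measurableSet_Ioi
    intro x _
    nlinarith [Real.exp_pos (-x^2/2), sq_nonneg x⁻¹]
  calc Erfc t ≤ _ := hmono
    _ = t⁻¹ * Real.exp (-t^2/2) := key

lemma erfc_lower {t : ℝ} (ht : 1 ≤ t) : (t⁻¹ - t⁻¹^3) * Real.exp (-t^2/2) ≤ Erfc t := by
  have htpos : (0:ℝ) < t := by linarith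
  have hderiv : ∀ x ∈ Ici t, HasDerivAt (fun s : ℝ => -(s⁻¹ - s⁻¹^3) * Real.exp (-s^2/2))
      ((1 - 3*x⁻¹^4) * Real.exp (-x^2/2)) x := by
    intro x hx
    have hx0 : x ≠ 0 := by simp only [mem_Ici] at hx; nlinarith
    have h1 : HasDerivAt (fun s : ℝ => -(s⁻¹ - s⁻¹^3)) (x⁻¹^2 - 3*x⁻¹^4) x := by
      have ha := hasDerivAt_inv hx0
      have hb := ha.pow 3
      have := (ha.sub hb).neg
      refine this.congr_deriv ?_
      norm_num
      field_simp
      ring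
    have h2 : HasDerivAt (fun s : ℝ => Real.exp (-s^2/2)) (-x * Real.exp (-x^2/2)) x := by
      have h3 : HasDerivAt (fun s : ℝ => -s^2/2) (-x) x := by
        have := (hasDerivAt_pow 2 x).neg.div_const 2
        exact this.congr_deriv (by norm_num; ring)
      have := (Real.hasDerivAt_exp (-x^2/2)).comp x h3
      exact this.congr_deriv (by ring)
    have := h1.mul h2
    refine this.congr_deriv ?_
    field_simp
    ring
  have hint : IntegrableOn (fun x : ℝ => (1 - 3*x⁻¹^4) * Real.exp (-x^2/2)) (Ioi t) := by
    apply Integrable.mono (g := fun x : ℝ => 4 * Real.exp (-x^2/2))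
      ((expInt.const_mul 4).restrict (s := Ioi t))
    · apply Measurable.aestronglyMeasurable
      measurability
    · filter_upwards [ae_restrict_mem measurableSet_Ioi] with x hx
      simp only [mem_Ioi] at hx
      have hx1 : 1 ≤ x := le_trans ht hx.le
      have h1 : x⁻¹^4 ≤ 1 := by
        have : x⁻¹ ≤ 1 := by
          rw [inv_le_one_iff₀]; right; linarith
        have h0 : 0 ≤ x⁻¹ := by positivity
        calc x⁻¹^4 ≤ 1^4 := pow_le_pow_left₀ h0 this 4
          _ = 1 := one_pow 4
      rw [Real.norm_eq_abs, Real.norm_eq_abs,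
        abs_of_nonneg (show (0:ℝ) ≤ 4 * Real.exp (-x^2/2) by positivity)]
      rw [abs_mul, abs_of_nonneg (Real.exp_pos _).le]
      apply mul_le_mul_of_nonneg_right _ (Real.exp_pos _).le
      rw [abs_le]
      constructor <;> nlinarith [pow_nonneg (show (0:ℝ) ≤ x⁻¹ by positivity) 4]
  have hlim : Tendsto (fun s : ℝ => -(s⁻¹ - s⁻¹^3) * Real.exp (-s^2/2)) atTop (𝓝 0) := by
    have h1 : Tendsto (fun s : ℝ => -(s⁻¹ - s⁻¹^3)) atTop (𝓝 (-((0:ℝ) - 0^3))) :=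
      (tendsto_inv_atTop_zero.sub (tendsto_inv_atTop_zero.pow 3)).neg
    rw [show (-((0:ℝ) - 0^3)) = 0 by norm_num] at h1
    simpa using h1.mul tendsto_exp_neg_sq
  have key := integral_Ioi_of_hasDerivAt_of_tendsto' hderiv hint hlim
  rw [zero_sub, neg_mul, neg_neg] at key
  have hmono : ∫ x in Ioi t, (1 - 3*x⁻¹^4) * Real.exp (-x^2/2) ≤ Erfc t := by
    apply setIntegral_mono_on hint expInt.restrict measurableSet_Ioi
    intro x _
    nlinarith [Real.exp_pos (-x^2/2), sq_nonneg (x⁻¹^2), Real.exp_pos (-x^2/2)]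
  calc (t⁻¹ - t⁻¹^3) * Real.exp (-t^2/2) = _ := key.symm
    _ ≤ Erfc t := hmono

lemma mills : Tendsto (fun t : ℝ => Erfc t * (t * Real.exp (t^2/2))) atTop (𝓝 1) := by
  have hlow : Tendsto (fun t : ℝ => 1 - t⁻¹^2) atTop (𝓝 1) := by
    have := tendsto_const_nhds (x := (1:ℝ)) (f := atTop) |>.sub (tendsto_inv_atTop_zero.pow 2)
    simpa using this
  apply tendsto_of_tendsto_of_tendsto_of_le_of_le' hlow tendsto_const_nhds
  · filter_upwards [eventually_ge_atTop (1:ℝ)] with t ht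
    have htpos : (0:ℝ) < t := by linarith
    have hE : Real.exp (-t^2/2) * Real.exp (t^2/2) = 1 := by
      rw [← Real.exp_add, show -t^2/2 + t^2/2 = 0 by ring, Real.exp_zero]
    have := erfc_lower ht
    have h2 : (t⁻¹ - t⁻¹^3) * Real.exp (-t^2/2) * (t * Real.exp (t^2/2))
        ≤ Erfc t * (t * Real.exp (t^2/2)) := by
      apply mul_le_mul_of_nonneg_right this
      positivity
    calc 1 - t⁻¹^2 = (t⁻¹ - t⁻¹^3) * t * (Real.exp (-t^2/2) * Real.exp (t^2/2)) := by
          rw [hE]; field_simp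
      _ = (t⁻¹ - t⁻¹^3) * Real.exp (-t^2/2) * (t * Real.exp (t^2/2)) := by ring
      _ ≤ _ := h2
  · filter_upwards [eventually_ge_atTop (1:ℝ)] with t ht
    have htpos : (0:ℝ) < t := by linarith
    have hE : Real.exp (-t^2/2) * Real.exp (t^2/2) = 1 := by
      rw [← Real.exp_add, show -t^2/2 + t^2/2 = 0 by ring, Real.exp_zero]
    have h2 : Erfc t * (t * Real.exp (t^2/2)) ≤ t⁻¹ * Real.exp (-t^2/2) * (t * Real.exp (t^2/2)) :=
      mul_le_mul_of_nonneg_right (erfc_upper ht) (by positivity)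
    calc Erfc t * (t * Real.exp (t^2/2)) ≤ _ := h2
      _ = t⁻¹ * t * (Real.exp (-t^2/2) * Real.exp (t^2/2)) := by ring
      _ = 1 := by rw [hE]; field_simp


section
variable (z : ℝ)

noncomputable def cfun : ℝ → ℝ := fun L => (1/2) * Real.log (4 * π * L)
noncomputable def ufun (z : ℝ) : ℝ → ℝ := fun L => (z + 2*L - cfun L) / Real.sqrt (2*L)

lemma tendsto_sqrt_atTop' : Tendsto Real.sqrt atTop atTop :=
  (tendsto_rpow_atTop (by norm_num : (0:ℝ) < 1/2)).congr fun x => (Real.sqrt_eq_rpow x).symm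

lemma tendsto_sqrt_two_mul : Tendsto (fun L : ℝ => Real.sqrt (2*L)) atTop atTop :=
  tendsto_sqrt_atTop'.comp (tendsto_id.const_mul_atTop two_pos)

lemma gfun_tendsto : Tendsto (fun L : ℝ => (z - cfun L) / Real.sqrt (2*L)) atTop (𝓝 0) := by
  have hsq := tendsto_sqrt_two_mul
  have h1 : Tendsto (fun L : ℝ => (z - (1/2)*Real.log (4*π)) / Real.sqrt (2*L)) atTop (𝓝 0) :=
    Tendsto.div_atTop tendsto_const_nhds hsq
  have h2 : Tendsto (fun L : ℝ => Real.log L / Real.sqrt L) atTop (𝓝 0) := by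
    have := (isLittleO_log_rpow_atTop one_half_pos).tendsto_div_nhds_zero
    apply this.congr' ?_
    filter_upwards [eventually_ge_atTop (0:ℝ)] with L hL
    rw [Real.sqrt_eq_rpow]
  have h3 : Tendsto (fun L : ℝ => (1/2) * Real.log L / Real.sqrt (2*L)) atTop (𝓝 0) := by
    have h4 : Tendsto (fun L : ℝ => ((1/2) / Real.sqrt 2) * (Real.log L / Real.sqrt L))
        atTop (𝓝 (((1/2) / Real.sqrt 2) * 0)) := h2.const_mul _
    rw [mul_zero] at h4
    apply h4.congr'
    filter_upwards [eventually_ge_atTop (0:ℝ)] with L hL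
    rw [Real.sqrt_mul (by norm_num : (0:ℝ) ≤ 2)]
    field_simp
  have := h1.sub h3
  rw [sub_zero] at this
  apply this.congr'
  filter_upwards [eventually_gt_atTop (0:ℝ)] with L hL
  have : Real.log (4*π*L) = Real.log (4*π) + Real.log L :=
    Real.log_mul (by positivity) (ne_of_gt hL)
  simp only [cfun, this]
  ring

lemma ufun_tendsto_atTop : Tendsto (ufun z) atTop atTop := by
  have key : ∀ᶠ L in atTop,
      Real.sqrt (2*L) + (z - cfun L) / Real.sqrt (2*L) = ufun z L := by
    filter_upwards [eventually_gt_atTop (0:ℝ)] with L hL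
    have hs : (0:ℝ) < Real.sqrt (2*L) := Real.sqrt_pos.mpr (by linarith)
    have hsq : Real.sqrt (2*L) * Real.sqrt (2*L) = 2*L :=
      Real.mul_self_sqrt (by linarith)
    rw [ufun, eq_comm, div_eq_iff hs.ne', add_mul, div_mul_cancel₀ _ hs.ne', hsq]
    ring
  apply Tendsto.congr' key
  exact tendsto_sqrt_two_mul.atTop_add (gfun_tendsto z)
end

lemma efun_tendsto (z : ℝ) : Tendsto (fun L => Real.exp L * Real.exp (-(ufun z L)^2/2)
    / (Real.sqrt (2*π) * ufun z L)) atTop (𝓝 (Real.exp (-z))) := by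
  have hg := gfun_tendsto z
  have hu := ufun_tendsto_atTop z
  have hs := tendsto_sqrt_two_mul
  have h2 : Tendsto (fun L => Real.exp (-((z - cfun L)/Real.sqrt (2*L))^2/2)) atTop (𝓝 1) := by
    have ha : Tendsto (fun L => -((z - cfun L)/Real.sqrt (2*L))^2/2) atTop (𝓝 0) := by
      have := (hg.pow 2).neg.div_const 2
      simpa using this
    have := (Real.continuous_exp.tendsto 0).comp ha
    simpa [Function.comp_def] using this
  have h3 : Tendsto (fun L => Real.sqrt (2*L) / ufun z L) atTop (𝓝 1) := by
    have hus : Tendsto (fun L => ufun z L / Real.sqrt (2*L)) atTop (𝓝 1) := by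
      have hgs : Tendsto (fun L => ((z - cfun L)/Real.sqrt (2*L)) / Real.sqrt (2*L))
          atTop (𝓝 0) := Tendsto.div_atTop hg hs
      have := (tendsto_const_nhds (x := (1:ℝ)) (f := atTop)).add hgs
      rw [add_zero] at this
      apply this.congr'
      filter_upwards [eventually_gt_atTop (0:ℝ)] with L hL
      have hs0 : (0:ℝ) < Real.sqrt (2*L) := Real.sqrt_pos.mpr (by linarith)
      have hsq : Real.sqrt (2*L) * Real.sqrt (2*L) = 2*L := Real.mul_self_sqrt (by linarith)
      have hne : Real.sqrt (2*L) * Real.sqrt (2*L) ≠ 0 := by positivity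
      rw [ufun, div_div, div_div, eq_div_iff hne, add_mul, one_mul,
        div_mul_cancel₀ _ hne, hsq]
      ring
    have := hus.inv₀ one_ne_zero
    rw [inv_one] at this
    apply this.congr
    intro L
    rw [inv_div]
  have hmain := ((tendsto_const_nhds (x := Real.exp (-z)) (f := atTop)).mul h2).mul h3
  rw [mul_one, mul_one] at hmain
  apply hmain.congr'
  filter_upwards [eventually_gt_atTop (0:ℝ), hu.eventually_gt_atTop 0] with L hL huL
  have hs0 : (0:ℝ) < Real.sqrt (2*L) := Real.sqrt_pos.mpr (by linarith)
  have hss : Real.sqrt (2*L) ^ 2 = 2*L := Real.sq_sqrt (by linarith)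
  have hgsq : ((z - cfun L)/Real.sqrt (2*L))^2 = (z - cfun L)^2/(2*L) := by
    rw [div_pow, hss]
  have hu2 : (ufun z L)^2 = (z + 2*L - cfun L)^2/(2*L) := by
    rw [ufun, div_pow, hss]
  have hexpc : Real.exp (cfun L) = Real.sqrt (2*π) * Real.sqrt (2*L) := by
    have h4 : (0:ℝ) < 4*π*L := by positivity
    rw [cfun, mul_comm ((1:ℝ)/2) _, ← Real.rpow_def_of_pos h4, ← Real.sqrt_eq_rpow,
      show (4*π*L) = (2*π)*(2*L) by ring, Real.sqrt_mul (by positivity)]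
  have key1 : Real.exp L * Real.exp (-(ufun z L)^2/2) =
      Real.exp (-z) * Real.exp (-((z - cfun L)/Real.sqrt (2*L))^2/2) * Real.exp (cfun L) := by
    rw [← Real.exp_add, ← Real.exp_add, ← Real.exp_add]
    congr 1
    rw [hu2, hgsq]
    field_simp
    ring
  rw [key1, hexpc]
  have hsp : (0:ℝ) < Real.sqrt (2*π) := Real.sqrt_pos.mpr (by positivity)
  field_simp


lemma pow_tendsto_exp {q : ℕ → ℝ} {c : ℝ} (hq : Tendsto (fun n : ℕ => (n:ℝ) * q n) atTop (𝓝 c))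
    (hq0 : ∀ᶠ n in atTop, 0 < q n) (hq1 : ∀ᶠ n in atTop, q n < 1) :
    Tendsto (fun n => (1 - q n)^n) atTop (𝓝 (Real.exp (-c))) := by
  have hq_zero : Tendsto q atTop (𝓝 0) := by
    have h1 : Tendsto (fun n : ℕ => ((n:ℝ) * q n) * ((n:ℝ))⁻¹) atTop (𝓝 (c * 0)) :=
      hq.mul (tendsto_inv_atTop_zero.comp tendsto_natCast_atTop_atTop)
    rw [mul_zero] at h1
    apply h1.congr'
    filter_upwards [eventually_ge_atTop 1] with n hn
    have : (n:ℝ) ≠ 0 := Nat.cast_ne_zero.mpr (by omega)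
    field_simp
  have hslope : Tendsto (slope Real.log 1) (𝓝[≠] 1) (𝓝 1) := by
    have := hasDerivAt_iff_tendsto_slope.mp (Real.hasDerivAt_log one_ne_zero)
    rwa [inv_one] at this
  have h1q : Tendsto (fun n => 1 - q n) atTop (𝓝[≠] (1:ℝ)) := by
    apply tendsto_nhdsWithin_of_tendsto_nhds_of_eventually_within
    · have := (tendsto_const_nhds (x := (1:ℝ)) (f := atTop)).sub hq_zero
      rw [sub_zero] at this
      exact this
    · filter_upwards [hq0] with n hn
      simp only [Set.mem_compl_iff, Set.mem_singleton_iff]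
      intro h
      have : q n = 0 := by linarith [sub_eq_self.mp h]
      linarith
  have hlog : Tendsto (fun n : ℕ => slope Real.log 1 (1 - q n)) atTop (𝓝 1) :=
    hslope.comp h1q
  have hnlog : Tendsto (fun n : ℕ => (n:ℝ) * Real.log (1 - q n)) atTop (𝓝 (-c)) := by
    have h2 := (hq.mul hlog).neg
    rw [mul_one] at h2
    apply h2.congr'
    filter_upwards [hq0] with n hn
    have hne : q n ≠ 0 := ne_of_gt hn
    rw [slope_def_field, Real.log_one, sub_zero, sub_sub_cancel_left]
    field_simp
  have hexp := (Real.continuous_exp.tendsto _).comp hnlog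
  apply hexp.congr'
  filter_upwards [hq0, hq1] with n hn0 hn1
  have hpos : 0 < 1 - q n := by linarith
  rw [Function.comp_apply, ← Real.log_pow, Real.exp_log (pow_pos hpos n)]


lemma erfc_pos {t : ℝ} (ht : 2 ≤ t) : 0 < Erfc t := by
  have h1 : (1:ℝ) ≤ t := by linarith
  have hlow := erfc_lower h1
  have ht0 : (0:ℝ) < t := by linarith
  have ha : (0:ℝ) < t⁻¹ := by positivity
  have ha2 : t⁻¹ ≤ 2⁻¹ := by
    apply inv_anti₀ (by norm_num) ht
  have hpos : 0 < (t⁻¹ - t⁻¹^3) * Real.exp (-t^2/2) := by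
    apply mul_pos _ (Real.exp_pos _)
    nlinarith [mul_pos ha ha]
  linarith

-- order statistic lemmas
lemma orderStat_le_iff {n : ℕ} (hn : 0 < n) (v : Fin n → ℝ) (x : ℝ) :
    orderStat v n ≤ x ↔ ∀ j, v j ≤ x := by
  have h : n - 1 < n := by omega
  rw [orderStat, dif_pos h]
  set σ := Tuple.sort v with hσ
  have hmax : ∀ j : Fin n, v j ≤ v (σ ⟨n-1, h⟩) := by
    intro j
    have h1 : σ.symm j ≤ (⟨n-1, h⟩ : Fin n) := by
      rw [Fin.le_def]
      have := (σ.symm j).isLt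
      simp only
      omega
    have := Tuple.monotone_sort v h1
    simpa [hσ] using this
  constructor
  · intro hle j
    exact le_trans (hmax j) hle
  · intro hj
    exact hj _

lemma orderStat_eq_sup' {n : ℕ} (hn : 0 < n) (v : Fin n → ℝ) :
    orderStat v n = Finset.univ.sup' (Finset.univ_nonempty_iff.mpr ⟨⟨0, hn⟩⟩) v := by
  apply le_antisymm
  · have h : n - 1 < n := by omega
    rw [orderStat, dif_pos h]
    exact Finset.le_sup' v (Finset.mem_univ _)
  · rw [Finset.sup'_le_iff]
    intro j _
    exact (orderStat_le_iff hn v _).mp le_rfl j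

lemma measurable_orderStat {Ω : Type*} [MeasurableSpace Ω] {Z : ℕ → Ω → ℝ}
    (hmeas : ∀ i, Measurable (Z i)) (n : ℕ) :
    Measurable (fun ω => orderStat (fun j : Fin n => Z j ω) n) := by
  rcases Nat.eq_zero_or_pos n with rfl | hn
  · have : (fun ω => orderStat (fun j : Fin 0 => Z j ω) 0) = fun _ => 0 := by
      funext ω
      rw [orderStat, dif_neg (by omega)]
    rw [this]
    exact measurable_const
  · have heq : (fun ω => orderStat (fun j : Fin n => Z j ω) n) =
        fun ω => Finset.univ.sup' (Finset.univ_nonempty_iff.mpr ⟨⟨0, hn⟩⟩)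
          (fun j : Fin n => Z j ω) := by
      funext ω
      exact orderStat_eq_sup' hn _
    rw [heq]
    have hne : (Finset.univ : Finset (Fin n)).Nonempty := Finset.univ_nonempty_iff.mpr ⟨⟨0, hn⟩⟩
    have hfun : (fun ω => Finset.univ.sup' hne (fun j : Fin n => Z j ω)) =
        Finset.univ.sup' hne (fun j : Fin n => Z j) := by
      funext ω
      rw [Finset.sup'_apply]
    rw [show (Finset.univ_nonempty_iff.mpr ⟨⟨0, hn⟩⟩ :
      (Finset.univ : Finset (Fin n)).Nonempty) = hne from rfl, hfun]
    exact Finset.measurable_sup' hne (fun j _ => hmeas j)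

lemma max_cdf {Ω : Type*} [MeasurableSpace Ω] (P : Measure Ω) [IsProbabilityMeasure P]
    (Z : ℕ → Ω → ℝ) (hmeas : ∀ i, Measurable (Z i))
    (hindep : iIndepFun Z P)
    (hdist : ∀ i, Measure.map (Z i) P = gaussianReal 0 1)
    {n : ℕ} (hn : 0 < n) (x : ℝ) :
    P {ω | orderStat (fun j : Fin n => Z j ω) n ≤ x} = (gaussianReal 0 1 (Iic x))^n := by
  have hset : {ω | orderStat (fun j : Fin n => Z j ω) n ≤ x} =
      ⋂ i ∈ Finset.range n, Z i ⁻¹' Iic x := by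
    ext ω
    simp only [mem_setOf_eq, orderStat_le_iff hn, mem_iInter, Finset.mem_range,
      mem_preimage, mem_Iic]
    constructor
    · intro h i hi
      exact h ⟨i, hi⟩
    · intro h j
      exact h j j.isLt
  rw [hset, hindep.measure_inter_preimage_eq_mul (Finset.range n) (sets := fun _ => Iic x)
    (fun i _ => measurableSet_Iic)]
  have hPZ : ∀ i, P (Z i ⁻¹' Iic x) = gaussianReal 0 1 (Iic x) := by
    intro i
    rw [← hdist i, Measure.map_apply (hmeas i) measurableSet_Iic]
  simp_rw [hPZ]
  rw [Finset.prod_const, Finset.card_range]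

noncomputable def Phi (x : ℝ) : ℝ := ∫ s in Iic x, gaussianPDFReal 0 1 s

lemma gaussianPDFReal_eq :
    gaussianPDFReal 0 1 = fun s => (Real.sqrt (2*π))⁻¹ * Real.exp (-s^2/2) := by
  funext s
  rw [gaussianPDFReal_def]
  norm_num

lemma gaussian_Iic (x : ℝ) : gaussianReal 0 1 (Iic x) = ENNReal.ofReal (Phi x) :=
  gaussianReal_apply_eq_integral 0 one_ne_zero (Iic x)

lemma Phi_nonneg (x : ℝ) : 0 ≤ Phi x :=
  integral_nonneg fun s => gaussianPDFReal_nonneg 0 1 s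

lemma Phi_eq (x : ℝ) : Phi x = 1 - (Real.sqrt (2*π))⁻¹ * Erfc x := by
  have h := intervalIntegral.integral_Iic_add_Ioi (b := x)
    (integrable_gaussianPDFReal 0 1).integrableOn (integrable_gaussianPDFReal 0 1).integrableOn
  rw [integral_gaussianPDFReal_eq_one 0 one_ne_zero] at h
  have h2 : ∫ s in Ioi x, gaussianPDFReal 0 1 s = (Real.sqrt (2*π))⁻¹ * Erfc x := by
    rw [gaussianPDFReal_eq, Erfc, ← MeasureTheory.integral_const_mul]
  rw [Phi, ← h, h2]
  ring

open Classical in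
lemma le_liminf_open_of_cdf {μs : ℕ → Measure ℝ} [∀ n, IsProbabilityMeasure (μs n)]
    {G : Measure ℝ} [IsProbabilityMeasure G]
    (hIoc : ∀ a b : ℝ, Tendsto (fun n => μs n (Ioc a b)) atTop (𝓝 (G (Ioc a b))))
    {U : Set ℝ} (hU : IsOpen U) : G U ≤ atTop.liminf (fun n => μs n U) := by
  rw [hU.measure_eq_iSup_isCompact]
  refine iSup₂_le fun K hKU => iSup_le fun hK => ?_
  rcases K.eq_empty_or_nonempty with rfl | hKne
  · simp
  obtain ⟨δ, hδ, hthick⟩ : ∃ δ > 0, Metric.thickening δ K ⊆ U :=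
    hK.exists_thickening_subset_open hU hKU
  obtain ⟨r, hr⟩ : ∃ r, K ⊆ Metric.ball 0 r := hK.isBounded.subset_ball 0
  have hrpos : 0 < r := by
    obtain ⟨x, hx⟩ := hKne
    have := hr hx
    simp only [Metric.mem_ball] at this
    exact lt_of_le_of_lt dist_nonneg this
  set s : ℝ := δ / 2 with hs
  have hspos : 0 < s := by positivity
  set m : ℕ := ⌈2 * r / s⌉₊ with hm
  set a : ℕ → ℝ := fun j => -r + j * s with ha
  have hamono : StrictMono a := fun i j hij => by
    simp only [ha, add_lt_add_iff_left]
    exact mul_lt_mul_of_pos_right (Nat.cast_lt.mpr hij) hspos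
  set S : Finset ℕ := (Finset.range m).filter (fun j => (Ioc (a j) (a (j+1)) ∩ K).Nonempty)
    with hS
  set V : Set ℝ := ⋃ j ∈ S, Ioc (a j) (a (j+1)) with hV
  have hKV : K ⊆ V := by
    intro x hx
    have hxball := hr hx
    simp only [Metric.mem_ball, Real.dist_eq, sub_zero, abs_lt] at hxball
    have hxr : 0 < x + r := by linarith [hxball.1]
    set j : ℕ := ⌈(x + r) / s⌉₊ - 1 with hj
    have hceil : 0 < ⌈(x + r) / s⌉₊ := Nat.ceil_pos.mpr (by positivity)
    have hj1 : j + 1 = ⌈(x + r) / s⌉₊ := Nat.succ_pred_eq_of_pos hceil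
    have hj1' : ((j : ℝ) + 1) = (⌈(x + r) / s⌉₊ : ℝ) := by
      rw [← hj1]; push_cast; ring
    have hmem : x ∈ Ioc (a j) (a (j+1)) := by
      constructor
      · have h2 : (j : ℝ) < (x + r) / s := by
          have h3 := Nat.ceil_lt_add_one (le_of_lt (show (0:ℝ) < (x+r)/s by positivity))
          linarith [hj1']
        have := (lt_div_iff₀ hspos).mp h2
        simp only [ha]; linarith
      · have h2 : (x + r) / s ≤ (j : ℝ) + 1 := by
          rw [hj1']; exact Nat.le_ceil _
        have := (div_le_iff₀ hspos).mp h2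
        simp only [ha]; push_cast; linarith
    have hjm : j < m := by
      have h1 : j + 1 ≤ m := by
        rw [hj1, hm]
        apply Nat.ceil_le_ceil
        rw [div_le_div_iff₀ hspos hspos]
        nlinarith [hxball.2, hspos.le]
      omega
    refine Set.mem_biUnion (show j ∈ S from ?_) hmem
    rw [hS, Finset.mem_filter]
    exact ⟨Finset.mem_range.mpr hjm, ⟨x, hmem, hx⟩⟩
  have hVU : V ⊆ U := by
    intro x hx
    simp only [hV, mem_iUnion] at hx
    obtain ⟨j, hjS, hxj⟩ := hx
    simp only [hS, Finset.mem_filter] at hjS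
    obtain ⟨y, hyj, hyK⟩ := hjS.2
    apply hthick
    rw [Metric.mem_thickening_iff]
    refine ⟨y, hyK, ?_⟩
    rw [Real.dist_eq, abs_lt]
    have h1 : a (j+1) - a j = s := by simp only [ha]; push_cast; ring
    obtain ⟨hx1, hx2⟩ := hxj
    obtain ⟨hy1, hy2⟩ := hyj
    have hss : s = δ / 2 := hs
    clear_value V S a m s
    constructor <;> linarith
  have hdisj : (S : Set ℕ).Pairwise (Function.onFun Disjoint fun j => Ioc (a j) (a (j+1))) := by
    intro i _ j _ hij
    have key : ∀ i j : ℕ, i < j →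
        Disjoint (Ioc (a i) (a (i+1))) (Ioc (a j) (a (j+1))) := by
      intro i j hlt
      rw [Set.Ioc_disjoint_Ioc]
      exact (min_le_left _ _).trans ((hamono.monotone hlt).trans (le_max_right _ _))
    rcases lt_or_gt_of_ne hij with hlt | hlt
    · exact key _ _ hlt
    · exact (key _ _ hlt).symm
  have hmeasV : ∀ (μ : Measure ℝ), μ V = ∑ j ∈ S, μ (Ioc (a j) (a (j+1))) := fun μ =>
    measure_biUnion_finset hdisj (fun j _ => measurableSet_Ioc)
  have htendV : Tendsto (fun n => μs n V) atTop (𝓝 (G V)) := by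
    simp_rw [hmeasV]
    exact tendsto_finset_sum _ (fun j _ => hIoc _ _)
  calc G K ≤ G V := measure_mono hKV
    _ = atTop.liminf (fun n => μs n V) := htendV.liminf_eq.symm
    _ ≤ atTop.liminf (fun n => μs n U) :=
        liminf_le_liminf (Eventually.of_forall fun n => measure_mono hVU)
lemma tendsto_integral_of_cdf (μs : ℕ → Measure ℝ) [∀ n, IsProbabilityMeasure (μs n)]
    (G : Measure ℝ) [IsProbabilityMeasure G]
    (h : ∀ x : ℝ, Tendsto (fun n => μs n (Iic x)) atTop (𝓝 (G (Iic x))))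
    (f : ℝ →ᵇ ℝ) :
    Tendsto (fun n => ∫ x, f x ∂(μs n)) atTop (𝓝 (∫ x, f x ∂G)) := by
  have hIoc : ∀ a b : ℝ, Tendsto (fun n => μs n (Ioc a b)) atTop (𝓝 (G (Ioc a b))) := by
    intro a b
    rcases le_or_gt a b with hab | hab
    · have key : ∀ (μ : Measure ℝ) [IsProbabilityMeasure μ],
          μ (Ioc a b) = μ (Iic b) - μ (Iic a) := by
        intro μ _
        rw [← Iic_sdiff_Iic, measure_diff (Iic_subset_Iic.mpr hab)
          measurableSet_Iic.nullMeasurableSet (measure_ne_top μ _)]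
      simp_rw [key]
      exact ENNReal.Tendsto.sub (h b) (h a) (Or.inl (measure_ne_top G _))
    · simp [Set.Ioc_eq_empty (not_lt.mpr hab.le)]
  set Ps : ℕ → ProbabilityMeasure ℝ := fun n => ⟨μs n, inferInstance⟩ with hPs
  set Gp : ProbabilityMeasure ℝ := ⟨G, inferInstance⟩ with hGp
  have key : Tendsto Ps atTop (𝓝 Gp) := by
    apply MeasureTheory.tendsto_of_forall_isOpen_le_liminf
    intro U hU
    have base := le_liminf_open_of_cdf hIoc hU
    have aux : ENNReal.ofNNReal (atTop.liminf (fun i => Ps i U)) =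
        atTop.liminf (ENNReal.ofNNReal ∘ fun i => Ps i U) := by
      refine Monotone.map_liminf_of_continuousAt (F := atTop) ENNReal.coe_mono (fun i => Ps i U)
        ENNReal.continuous_coe.continuousAt ?_ ?_
      · exact IsBoundedUnder.isCoboundedUnder_ge ⟨1, by simp⟩
      · exact ⟨0, by simp⟩
    rw [← ENNReal.coe_le_coe, aux]
    convert base using 2
    · exact ProbabilityMeasure.ennreal_coeFn_eq_coeFn_toMeasure Gp U
    · ext n
      exact ProbabilityMeasure.ennreal_coeFn_eq_coeFn_toMeasure (Ps n) U
  exact MeasureTheory.ProbabilityMeasure.tendsto_iff_forall_integral_tendsto.mp key f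

end Helpers

open Set Real in
/-- For i.i.d. standard normal `Z_1, Z_2, …` with sample maximum `Z_(n)` of the first `n`
variables, `√(2 log n) · Z_(n) − 2 log n + (1/2) log(4π log n)` converges in distribution to
the standard Gumbel distribution `G₃`, whose CDF is `exp(−e^{−z})`. -/
theorem normalized_maximum_tendsto_gumbel
    {Ω : Type*} [MeasurableSpace Ω] (P : Measure Ω) [IsProbabilityMeasure P]
    (Z : ℕ → Ω → ℝ)
    (hmeas : ∀ i, Measurable (Z i))
    (hindep : iIndepFun Z P)
    (hdist : ∀ i, Measure.map (Z i) P = gaussianReal 0 1)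
    (G : Measure ℝ) (hGprob : IsProbabilityMeasure G)
    (hGcdf : ∀ z : ℝ, G (Set.Iic z) = ENNReal.ofReal (Real.exp (-Real.exp (-z)))) :
    ∀ f : ℝ →ᵇ ℝ,
      Tendsto (fun n : ℕ => ∫ ω, f (Real.sqrt (2 * Real.log n) *
            orderStat (fun j : Fin n => Z j ω) n
          - 2 * Real.log n + (1 / 2) * Real.log (4 * Real.pi * Real.log n)) ∂P)
        atTop (𝓝 (∫ x, f x ∂G)) := by
  intro f
  set W : ℕ → Ω → ℝ := fun n ω => Real.sqrt (2 * Real.log n) *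
      orderStat (fun j : Fin n => Z j ω) n
      - 2 * Real.log n + (1 / 2) * Real.log (4 * Real.pi * Real.log n) with hW
  have hWmeas : ∀ n, Measurable (W n) := fun n =>
    (((measurable_orderStat hmeas n).const_mul _).sub measurable_const).add measurable_const
  set μs : ℕ → Measure ℝ := fun n => Measure.map (W n) P with hμs
  haveI : ∀ n, IsProbabilityMeasure (μs n) := fun n =>
    Measure.isProbabilityMeasure_map (hWmeas n).aemeasurable
  have hcdf : ∀ z : ℝ, Tendsto (fun n => μs n (Iic z)) atTop (𝓝 (G (Iic z))) := by
    intro z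
    have hlogn : Tendsto (fun n : ℕ => Real.log n) atTop atTop :=
      Real.tendsto_log_atTop.comp tendsto_natCast_atTop_atTop
    set t : ℕ → ℝ := fun n => ufun z (Real.log n) with ht
    have htn : Tendsto t atTop atTop := (ufun_tendsto_atTop z).comp hlogn
    set q : ℕ → ℝ := fun n => (Real.sqrt (2*π))⁻¹ * Erfc (t n) with hq
    have hsp : (0:ℝ) < Real.sqrt (2*π) := Real.sqrt_pos.mpr (by positivity)
    have hnq : Tendsto (fun n : ℕ => (n:ℝ) * q n) atTop (𝓝 (Real.exp (-z))) := by
      have h1 : Tendsto (fun n : ℕ => Erfc (t n) * (t n * Real.exp ((t n)^2/2)))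
          atTop (𝓝 1) := mills.comp htn
      have h2 : Tendsto (fun n : ℕ => Real.exp (Real.log n) * Real.exp (-(t n)^2/2)
          / (Real.sqrt (2*π) * (t n))) atTop (𝓝 (Real.exp (-z))) := (efun_tendsto z).comp hlogn
      have h3 := h1.mul h2
      rw [one_mul] at h3
      apply h3.congr'
      filter_upwards [htn.eventually_gt_atTop 0, eventually_ge_atTop 1] with n htn0 hn1
      have hn0 : (0:ℝ) < n := Nat.cast_pos.mpr (by omega)
      have hexplog : Real.exp (Real.log n) = n := Real.exp_log hn0
      have hE : Real.exp ((t n)^2/2) * Real.exp (-(t n)^2/2) = 1 := by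
        rw [← Real.exp_add, show (t n)^2/2 + -(t n)^2/2 = 0 by ring, Real.exp_zero]
      have htne : t n ≠ 0 := ne_of_gt htn0
      show Erfc (t n) * (t n * Real.exp ((t n)^2/2)) *
          (Real.exp (Real.log n) * Real.exp (-(t n)^2/2) / (Real.sqrt (2*π) * t n)) =
          (n:ℝ) * ((Real.sqrt (2*π))⁻¹ * Erfc (t n))
      rw [hexplog, div_eq_mul_inv ((n:ℝ) * Real.exp (-(t n)^2/2)) (Real.sqrt (2*π) * t n), mul_inv]
      calc Erfc (t n) * (t n * Real.exp ((t n)^2/2)) *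
          ((n:ℝ) * Real.exp (-(t n)^2/2) * ((Real.sqrt (2*π))⁻¹ * (t n)⁻¹))
          = (n:ℝ) * ((Real.sqrt (2*π))⁻¹ * Erfc (t n)) *
            ((Real.exp ((t n)^2/2) * Real.exp (-(t n)^2/2)) * (t n * (t n)⁻¹)) := by ring
        _ = (n:ℝ) * ((Real.sqrt (2*π))⁻¹ * Erfc (t n)) := by
            rw [hE, mul_inv_cancel₀ htne]
            ring
    have hq0 : ∀ᶠ n in atTop, 0 < q n := by
      filter_upwards [htn.eventually_ge_atTop 2] with n h2
      exact mul_pos (by positivity) (erfc_pos h2)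
    have hq1 : ∀ᶠ n in atTop, q n < 1 := by
      filter_upwards [htn.eventually_ge_atTop 2] with n h2
      have h1 : (1:ℝ) ≤ t n := by linarith
      have hup := erfc_upper h1
      have hA : Erfc (t n) ≤ 1 := by
        have hinv : (t n)⁻¹ ≤ 1 := by
          rw [inv_le_one_iff₀]
          right; linarith
        have hexp : Real.exp (-(t n)^2/2) ≤ 1 := by
          rw [Real.exp_le_one_iff]
          nlinarith [sq_nonneg (t n)]
        have hinv0 : (0:ℝ) ≤ (t n)⁻¹ := by positivity
        nlinarith [Real.exp_pos (-(t n)^2/2)]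
      have hs1 : 1 < Real.sqrt (2*π) := by
        rw [show (1:ℝ) = Real.sqrt 1 by simp]
        exact Real.sqrt_lt_sqrt (by norm_num) (by nlinarith [Real.pi_gt_three])
      calc q n ≤ (Real.sqrt (2*π))⁻¹ * 1 := by
            rw [hq]
            exact mul_le_mul_of_nonneg_left hA (by positivity)
        _ < 1 := by
            rw [mul_one, inv_lt_one_iff₀]
            right; exact hs1
    have hΦq : ∀ n, Phi (t n) = 1 - q n := fun n => Phi_eq (t n)
    have hreal : Tendsto (fun n : ℕ => (Phi (t n))^n) atTop
        (𝓝 (Real.exp (-(Real.exp (-z))))) := by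
      have := pow_tendsto_exp hnq hq0 hq1
      apply this.congr fun n => by rw [hΦq n]
    have hmeasIic : ∀ᶠ n in atTop, μs n (Iic z) = ENNReal.ofReal ((Phi (t n))^n) := by
      filter_upwards [hlogn.eventually_gt_atTop 0, eventually_ge_atTop 1] with n hlog hn1
      have hs0 : 0 < Real.sqrt (2 * Real.log n) := Real.sqrt_pos.mpr (by linarith)
      have hpre : W n ⁻¹' Iic z = {ω | orderStat (fun j : Fin n => Z j ω) n ≤ t n} := by
        ext ω
        simp only [mem_preimage, mem_Iic, mem_setOf_eq, hW, ht, ufun, cfun]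
        rw [le_div_iff₀ hs0]
        constructor <;> intro h <;> linarith
      have hmap : μs n (Iic z) = P (W n ⁻¹' Iic z) :=
        Measure.map_apply (hWmeas n) measurableSet_Iic
      rw [hmap, hpre, max_cdf P Z hmeas hindep hdist (by omega : 0 < n) (t n), gaussian_Iic,
        ← ENNReal.ofReal_pow (Phi_nonneg _)]
    rw [hGcdf z]
    exact (ENNReal.tendsto_ofReal hreal).congr' (hmeasIic.mono fun n h => h.symm)
  have key := tendsto_integral_of_cdf μs G hcdf f
  have hint : ∀ n : ℕ, ∫ ω, f (W n ω) ∂P = ∫ x, f x ∂(μs n) := fun n =>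
    (integral_map (hWmeas n).aemeasurable f.continuous.measurable.aestronglyMeasurable).symm
  exact key.congr fun n => (hint n).symm
end

section
/- If Y and W are independent random variables each having the standard Gumbel distribution G_3 with cumulative distribution function exp(−e^{−z}), then the random variable (Y − W)/2 follows the logistic distribution L(0, 1/2); that is, its law is the probability measure on ℝ with cumulative distribution function z ↦ 1/(1 + e^{−2z}). -/
open MeasureTheory ProbabilityTheory Filter Topology BoundedContinuousFunction

private lemma gumbel_hasDerivAt (b : ℝ) (hb : 0 < b) (x : ℝ) :
    HasDerivAt (fun x => Real.exp (-b * Real.exp (-x)) / b)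
      (Real.exp (-x) * Real.exp (-b * Real.exp (-x))) x := by
  have h1 : HasDerivAt (fun x : ℝ => -x) (-1) x := (hasDerivAt_id x).neg
  have h2 : HasDerivAt (fun x : ℝ => Real.exp (-x)) (Real.exp (-x) * (-1)) x :=
    (Real.hasDerivAt_exp (-x)).comp x h1
  have h3 : HasDerivAt (fun x : ℝ => -b * Real.exp (-x)) (-b * (Real.exp (-x) * (-1))) x :=
    h2.const_mul (-b)
  have h4 := ((Real.hasDerivAt_exp (-b * Real.exp (-x))).comp x h3).div_const b
  refine h4.congr_deriv ?_
  rw [div_eq_iff hb.ne']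
  ring

private lemma gumbel_tendsto_atBot (b : ℝ) (hb : 0 < b) :
    Tendsto (fun x => Real.exp (-b * Real.exp (-x)) / b) atBot (𝓝 0) := by
  have h1 : Tendsto (fun x : ℝ => Real.exp (-x)) atBot atTop :=
    Real.tendsto_exp_atTop.comp tendsto_neg_atBot_atTop
  have h2 : Tendsto (fun x : ℝ => -b * Real.exp (-x)) atBot atBot :=
    h1.const_mul_atTop_of_neg (by linarith)
  have h3 : Tendsto (fun x : ℝ => Real.exp (-b * Real.exp (-x))) atBot (𝓝 0) :=
    Real.tendsto_exp_atBot.comp h2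
  simpa using h3.div_const b

private lemma gumbel_tendsto_atTop (b : ℝ) (hb : 0 < b) :
    Tendsto (fun x => Real.exp (-b * Real.exp (-x)) / b) atTop (𝓝 (1 / b)) := by
  have h1 : Tendsto (fun x : ℝ => Real.exp (-x)) atTop (𝓝 0) :=
    Real.tendsto_exp_neg_atTop_nhds_zero
  have h2 : Tendsto (fun x : ℝ => -b * Real.exp (-x)) atTop (𝓝 0) := by
    simpa using h1.const_mul (-b)
  have h3 : Tendsto (fun x : ℝ => Real.exp (-b * Real.exp (-x))) atTop (𝓝 1) := by
    have := (Real.continuous_exp.tendsto 0).comp h2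
    simpa [Function.comp_def] using this
  simpa using h3.div_const b

private lemma gumbel_bound (b : ℝ) (hb : 0 < b) (x : ℝ) :
    Real.exp (-x) * Real.exp (-b * Real.exp (-x)) ≤ (2 / b) ^ 2 * Real.exp x := by
  set u := Real.exp (-x) with hu
  have hu0 : 0 < u := Real.exp_pos _
  have hC : (0:ℝ) < 2 / b := by positivity
  have h2 : b * u / 2 ≤ Real.exp (b * u / 2) := by
    have := Real.add_one_le_exp (b * u / 2); linarith
  have key : b * u / 2 * Real.exp (-(b * u / 2)) ≤ 1 := by
    calc b * u / 2 * Real.exp (-(b * u / 2))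
        ≤ Real.exp (b * u / 2) * Real.exp (-(b * u / 2)) :=
          mul_le_mul_of_nonneg_right h2 (Real.exp_nonneg _)
      _ = 1 := by rw [← Real.exp_add]; simp
  have key2 : u * Real.exp (-(b * u / 2)) ≤ 2 / b := by
    have h := mul_le_mul_of_nonneg_left key hC.le
    calc u * Real.exp (-(b * u / 2))
        = 2 / b * (b * u / 2 * Real.exp (-(b * u / 2))) := by field_simp
      _ ≤ 2 / b * 1 := h
      _ = 2 / b := mul_one _
  have key3 : u ^ 2 * Real.exp (-b * u) ≤ (2 / b) ^ 2 := by
    have h := mul_le_mul key2 key2 (by positivity) hC.le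
    calc u ^ 2 * Real.exp (-b * u)
        = (u * Real.exp (-(b * u / 2))) * (u * Real.exp (-(b * u / 2))) := by
          rw [show (u * Real.exp (-(b * u / 2))) * (u * Real.exp (-(b * u / 2)))
              = u ^ 2 * (Real.exp (-(b * u / 2)) * Real.exp (-(b * u / 2))) by ring,
            ← Real.exp_add]
          ring_nf
      _ ≤ 2 / b * (2 / b) := h
      _ = (2 / b) ^ 2 := (sq (2 / b)).symm
  have hmul : Real.exp x * u = 1 := by rw [hu, ← Real.exp_add]; simp
  have hfin : u * (u * Real.exp (-b * u)) ≤ u * ((2 / b) ^ 2 * Real.exp x) := by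
    calc u * (u * Real.exp (-b * u)) = u ^ 2 * Real.exp (-b * u) := by ring
      _ ≤ (2 / b) ^ 2 := key3
      _ = u * ((2 / b) ^ 2 * Real.exp x) := by
          rw [show u * ((2 / b) ^ 2 * Real.exp x) = (2 / b) ^ 2 * (Real.exp x * u) by ring,
            hmul, mul_one]
  exact le_of_mul_le_mul_left hfin hu0

private lemma gumbel_integrable (b : ℝ) (hb : 0 < b) :
    Integrable (fun x => Real.exp (-x) * Real.exp (-b * Real.exp (-x))) := by
  have hcont : Continuous fun x : ℝ => Real.exp (-x) * Real.exp (-b * Real.exp (-x)) := by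
    fun_prop
  have hnn : ∀ x : ℝ, 0 ≤ Real.exp (-x) * Real.exp (-b * Real.exp (-x)) := fun x => by positivity
  rw [← integrableOn_univ, ← Set.Iic_union_Ioi (a := (0:ℝ)), integrableOn_union]
  constructor
  · refine Integrable.mono' (((integrableOn_exp_Iic 0).const_mul ((2 / b) ^ 2)))
      hcont.aestronglyMeasurable ?_
    filter_upwards with x
    rw [Real.norm_eq_abs, abs_of_nonneg (hnn x)]
    exact gumbel_bound b hb x
  · refine Integrable.mono' (exp_neg_integrableOn_Ioi 0 (one_pos))
      hcont.aestronglyMeasurable ?_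
    filter_upwards with x
    rw [Real.norm_eq_abs, abs_of_nonneg (hnn x)]
    have h1 : Real.exp (-b * Real.exp (-x)) ≤ 1 := by
      rw [Real.exp_le_one_iff]
      have : 0 < Real.exp (-x) := Real.exp_pos _
      nlinarith
    calc Real.exp (-x) * Real.exp (-b * Real.exp (-x)) ≤ Real.exp (-x) * 1 :=
          mul_le_mul_of_nonneg_left h1 (Real.exp_nonneg _)
      _ = Real.exp (-1 * x) := by rw [mul_one]; ring_nf

private lemma gumbel_integral_Iic (b : ℝ) (hb : 0 < b) (a : ℝ) :
    ∫ x in Set.Iic a, Real.exp (-x) * Real.exp (-b * Real.exp (-x))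
      = Real.exp (-b * Real.exp (-a)) / b := by
  rw [show Real.exp (-b * Real.exp (-a)) / b = Real.exp (-b * Real.exp (-a)) / b - 0 by ring]
  exact integral_Iic_of_hasDerivAt_of_tendsto' (fun x _ => gumbel_hasDerivAt b hb x)
    (gumbel_integrable b hb).integrableOn (gumbel_tendsto_atBot b hb)

private lemma gumbel_integral_univ (b : ℝ) (hb : 0 < b) :
    ∫ x, Real.exp (-x) * Real.exp (-b * Real.exp (-x)) = 1 / b := by
  rw [show (1:ℝ) / b = 1 / b - 0 by ring]
  exact integral_of_hasDerivAt_of_tendsto (fun x => gumbel_hasDerivAt b hb x)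
    (gumbel_integrable b hb) (gumbel_tendsto_atBot b hb) (gumbel_tendsto_atTop b hb)

/-- If `Y` and `W` are independent random variables each with the standard Gumbel distribution
(CDF `exp(−e^{−z})`), then `(Y − W)/2` follows the logistic distribution `L(0, 1/2)`:
its law has CDF `z ↦ 1/(1 + e^{−2z})`. -/
theorem gumbel_difference_logistic
    {Ω : Type*} [MeasurableSpace Ω] (P : Measure Ω) [IsProbabilityMeasure P]
    (Y W : Ω → ℝ) (hY : Measurable Y) (hW : Measurable W)
    (hindep : IndepFun Y W P)
    (G : Measure ℝ)
    (hGcdf : ∀ z : ℝ, G (Set.Iic z) = ENNReal.ofReal (Real.exp (-Real.exp (-z))))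
    (hYlaw : Measure.map Y P = G) (hWlaw : Measure.map W P = G) :
    ∀ z : ℝ, Measure.map (fun ω => (Y ω - W ω) / 2) P (Set.Iic z)
      = ENNReal.ofReal (1 / (1 + Real.exp (-2 * z))) := by
  classical
  -- the density of the Gumbel distribution
  set g : ℝ → ENNReal := fun x => ENNReal.ofReal (Real.exp (-x) * Real.exp (-1 * Real.exp (-x)))
    with hgdef
  have hcontg : Continuous fun x : ℝ => Real.exp (-x) * Real.exp (-1 * Real.exp (-x)) := by
    fun_prop
  have hgmeas : Measurable g := ENNReal.measurable_ofReal.comp hcontg.measurable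
  set μ : Measure ℝ := volume.withDensity g with hμdef
  have hμIic : ∀ a : ℝ, μ (Set.Iic a) = ENNReal.ofReal (Real.exp (-Real.exp (-a))) := by
    intro a
    rw [hμdef, withDensity_apply _ measurableSet_Iic]
    rw [hgdef]
    rw [← ofReal_integral_eq_lintegral_ofReal (gumbel_integrable 1 one_pos).integrableOn
      (Filter.Eventually.of_forall fun x => by positivity)]
    rw [gumbel_integral_Iic 1 one_pos a]
    norm_num
  have hμprob : IsProbabilityMeasure μ := by
    constructor
    rw [hμdef, withDensity_apply _ MeasurableSet.univ, Measure.restrict_univ, hgdef]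
    rw [← ofReal_integral_eq_lintegral_ofReal (gumbel_integrable 1 one_pos)
      (Filter.Eventually.of_forall fun x => by positivity)]
    rw [gumbel_integral_univ 1 one_pos]
    norm_num
  have hGμ : G = μ := by
    refine (Measure.ext_of_Iic μ G fun a => ?_).symm
    rw [hμIic a, hGcdf a]
  -- the joint law of (W, Y)
  have hWY : Measure.map (fun ω => (W ω, Y ω)) P = μ.prod μ := by
    have h := (indepFun_iff_map_prod_eq_prod_map_map hW.aemeasurable hY.aemeasurable).mp
      hindep.symm
    rw [hWlaw, hYlaw, hGμ] at h
    exact h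
  intro z
  set c : ℝ := Real.exp (-2 * z) with hcdef
  have hc : 0 < c := Real.exp_pos _
  have hmeas2 : Measurable fun p : ℝ × ℝ => (p.2 - p.1) / 2 := by fun_prop
  have hcomp : (fun ω => (Y ω - W ω) / 2)
      = (fun p : ℝ × ℝ => (p.2 - p.1) / 2) ∘ (fun ω => (W ω, Y ω)) := rfl
  rw [hcomp, ← Measure.map_map hmeas2 (hW.prodMk hY), hWY,
    Measure.map_apply hmeas2 measurableSet_Iic]
  have hset : (fun p : ℝ × ℝ => (p.2 - p.1) / 2) ⁻¹' Set.Iic z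
      = {p : ℝ × ℝ | p.2 ≤ 2 * z + p.1} := by
    ext p
    simp only [Set.mem_preimage, Set.mem_Iic, Set.mem_setOf_eq]
    constructor <;> intro h <;> linarith
  rw [hset]
  have hsetm : MeasurableSet {p : ℝ × ℝ | p.2 ≤ 2 * z + p.1} :=
    measurableSet_le measurable_snd (by fun_prop)
  rw [Measure.prod_apply hsetm]
  have hslice : ∀ x : ℝ, (Prod.mk x ⁻¹' {p : ℝ × ℝ | p.2 ≤ 2 * z + p.1}) = Set.Iic (2 * z + x) :=
    fun x => rfl
  have hint : ∀ x : ℝ, μ (Prod.mk x ⁻¹' {p : ℝ × ℝ | p.2 ≤ 2 * z + p.1})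
      = ENNReal.ofReal (Real.exp (-Real.exp (-(2 * z + x)))) := by
    intro x
    rw [hslice x, hμIic]
  calc ∫⁻ x, μ (Prod.mk x ⁻¹' {p : ℝ × ℝ | p.2 ≤ 2 * z + p.1}) ∂μ
      = ∫⁻ x, ENNReal.ofReal (Real.exp (-Real.exp (-(2 * z + x)))) ∂μ := by
        exact lintegral_congr hint
    _ = ∫⁻ x, (g * fun x => ENNReal.ofReal (Real.exp (-Real.exp (-(2 * z + x))))) x := by
        rw [hμdef]
        exact lintegral_withDensity_eq_lintegral_mul volume hgmeas
          (ENNReal.measurable_ofReal.comp (by fun_prop))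
    _ = ∫⁻ x, ENNReal.ofReal (Real.exp (-x) * Real.exp (-(1 + c) * Real.exp (-x))) := by
        refine lintegral_congr fun x => ?_
        simp only [Pi.mul_apply, hgdef]
        rw [← ENNReal.ofReal_mul (by positivity)]
        congr 1
        have h1 : Real.exp (-(2 * z + x)) = c * Real.exp (-x) := by
          rw [hcdef, ← Real.exp_add]; ring_nf
        rw [h1, mul_assoc, ← Real.exp_add]
        congr 1
        ring
    _ = ENNReal.ofReal (1 / (1 + Real.exp (-2 * z))) := by
        rw [← ofReal_integral_eq_lintegral_ofReal (gumbel_integrable (1 + c) (by positivity))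
          (Filter.Eventually.of_forall fun x => by positivity)]
        rw [gumbel_integral_univ (1 + c) (by positivity)]
end
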